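/- Let c > 0 be a real number with 2c < 1, and let d be a real number satisfying (1−2c)ln(1−2c) + 2c·ln(c) + c²d ≥ 0. Then, in the Erdős–Rényi random graph G(N, d/N), asymptotically almost surely every two disjoint vertex sets S, T with |S| = |T| = cN satisfy e(S,T) ≥ 1 (there is at least one edge between S and T). -/

import Mathlib

open MeasureTheory

/-- The Erdős–Rényi random graph `G(N, p)`: each unordered pair of vertices of `Fin N` is an
edge independently with probability `p` (probabilities are truncated at `1`). A sample is the
indicator function of the edge set. -/
noncomputable def erdosRenyi (N : ℕ) (p : ℝ) : Measure (Sym2 (Fin N) → Bool) :=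
  Measure.pi fun _ =>
    (PMF.bernoulli (min (Real.toNNReal p) 1) (min_le_right _ _)).toMeasure

/-- In a sampled graph `f`, `S` and `T` are joined by at least one edge. -/
def hasEdgeBetween {N : ℕ} (f : Sym2 (Fin N) → Bool) (S T : Finset (Fin N)) : Prop :=
  ∃ s ∈ S, ∃ t ∈ T, f s(s, t) = true

set_option maxHeartbeats 1000000

open Stirling Real Filter

lemma factorial_upper (n : ℕ) (hn : 1 ≤ n) :
    (n.factorial : ℝ) ≤ Real.exp 1 * Real.sqrt n * ((n:ℝ) / Real.exp 1) ^ n := by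
  have h1 : stirlingSeq n ≤ Real.exp 1 / Real.sqrt 2 := by
    obtain ⟨m, rfl⟩ := Nat.exists_eq_add_of_le' hn
    simpa using stirlingSeq'_antitone (Nat.zero_le m)
  have hn0 : (0:ℝ) < (n:ℝ) := by positivity
  have hpos : (0:ℝ) < Real.sqrt (2 * (n:ℝ)) * ((n:ℝ) / Real.exp 1) ^ n := by positivity
  rw [stirlingSeq, div_le_iff₀ hpos] at h1
  calc (n.factorial : ℝ) ≤ Real.exp 1 / Real.sqrt 2 * (Real.sqrt (2 * (n:ℝ)) * ((n:ℝ) / Real.exp 1) ^ n) := h1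
    _ = Real.exp 1 * Real.sqrt n * ((n:ℝ) / Real.exp 1) ^ n := by
        rw [Real.sqrt_mul (by norm_num : (0:ℝ) ≤ 2)]
        rw [div_mul_eq_mul_div, mul_comm (Real.sqrt 2)]
        field_simp

lemma factorial_lower (n : ℕ) (hn : 1 ≤ n) :
    Real.sqrt π * (Real.sqrt (2 * (n:ℝ)) * ((n:ℝ) / Real.exp 1) ^ n) ≤ (n.factorial : ℝ) := by
  have h1 : Real.sqrt π ≤ stirlingSeq n := by
    obtain ⟨m, rfl⟩ := Nat.exists_eq_add_of_le' hn
    have ht : Filter.Tendsto (stirlingSeq ∘ Nat.succ) atTop (nhds (Real.sqrt π)) :=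
      tendsto_stirlingSeq_sqrt_pi.comp (Filter.tendsto_add_atTop_nat 1)
    exact stirlingSeq'_antitone.le_of_tendsto ht m
  have hn0 : (0:ℝ) < (n:ℝ) := by positivity
  have hpos : (0:ℝ) < Real.sqrt (2 * (n:ℝ)) * ((n:ℝ) / Real.exp 1) ^ n := by positivity
  rw [stirlingSeq, le_div_iff₀ hpos] at h1
  linarith

instance erdosRenyi.isProbabilityMeasure (N : ℕ) (p : ℝ) :
    IsProbabilityMeasure (erdosRenyi N p) := by
  unfold erdosRenyi; infer_instance

lemma bern_false (q : NNReal) (h : q ≤ 1) :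
    (PMF.bernoulli q h).toMeasure {false} = ((1 - q : NNReal) : ENNReal) := by
  rw [PMF.toMeasure_apply_singleton _ _ (measurableSet_singleton _), PMF.bernoulli_apply]
  rfl

def badSet (N : ℕ) (S T : Finset (Fin N)) : Set (Sym2 (Fin N) → Bool) :=
  Set.pi Set.univ (fun i =>
    if i ∈ (S ×ˢ T).image (fun pr => s(pr.1, pr.2)) then ({false} : Set Bool) else Set.univ)

lemma measure_bad (N : ℕ) (p : ℝ) (S T : Finset (Fin N)) (hdisj : Disjoint S T) :
    erdosRenyi N p (badSet N S T)
      = (1 - min (ENNReal.ofReal p) 1) ^ (S.card * T.card) := by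
  unfold badSet
  set q := min (Real.toNNReal p) 1 with hq
  have hqq : ((1 - q : NNReal) : ENNReal) = 1 - min (ENNReal.ofReal p) 1 := by
    rw [hq, ENNReal.coe_sub, ENNReal.coe_min, ENNReal.coe_one]; rfl
  set E := (S ×ˢ T).image (fun pr : Fin N × Fin N => s(pr.1, pr.2)) with hE
  have hcard : E.card = S.card * T.card := by
    rw [hE, Finset.card_image_of_injOn, Finset.card_product]
    rintro ⟨a, b⟩ hab ⟨a', b'⟩ hab' h
    obtain ⟨ha, hb⟩ := Finset.mem_product.mp hab
    obtain ⟨ha', hb'⟩ := Finset.mem_product.mp hab'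
    rw [Sym2.eq_iff] at h
    rcases h with ⟨rfl, rfl⟩ | ⟨h1, h2⟩
    · rfl
    · exact ((Finset.disjoint_left.mp hdisj ha) (h1 ▸ hb')).elim
  rw [erdosRenyi, Measure.pi_pi]
  have : ∀ i : Sym2 (Fin N),
      (PMF.bernoulli q (min_le_right _ _)).toMeasure
        (if i ∈ E then ({false} : Set Bool) else Set.univ)
      = if i ∈ E then ((1 - q : NNReal) : ENNReal) else 1 := by
    intro i
    by_cases hi : i ∈ E
    · simp only [hi, if_true]
      exact bern_false _ _
    · simp only [hi, if_false]
      exact measure_univ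
  rw [Finset.prod_congr rfl (fun i _ => this i)]
  rw [Finset.prod_ite_mem, Finset.univ_inter, Finset.prod_const, hcard, hqq]

lemma union_bound (N : ℕ) (p : ℝ) (k : ℕ) :
    1 - (N.choose k * (N - k).choose k : ENNReal) * (1 - min (ENNReal.ofReal p) 1) ^ (k * k)
    ≤ erdosRenyi N p {f | ∀ S T : Finset (Fin N), Disjoint S T →
        S.card = k → T.card = k → hasEdgeBetween f S T} := by
  set μ := erdosRenyi N p
  set G := {f : Sym2 (Fin N) → Bool | ∀ S T : Finset (Fin N), Disjoint S T →
        S.card = k → T.card = k → hasEdgeBetween f S T} with hG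
  set Q : Finset (Finset (Fin N) × Finset (Fin N)) :=
    (Finset.univ.powersetCard k).biUnion
      (fun S => (Sᶜ.powersetCard k).image (fun T => (S, T))) with hQ
  -- each element of Q is a disjoint pair with cards k
  have hQmem : ∀ q ∈ Q, Disjoint q.1 q.2 ∧ q.1.card = k ∧ q.2.card = k := by
    intro q hq
    rw [hQ, Finset.mem_biUnion] at hq
    obtain ⟨S, hS, hq⟩ := hq
    obtain ⟨T, hT, rfl⟩ := Finset.mem_image.mp hq
    obtain ⟨hT1, hT2⟩ := Finset.mem_powersetCard.mp hT
    obtain ⟨_, hS2⟩ := Finset.mem_powersetCard.mp hS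
    exact ⟨disjoint_compl_right.mono_right hT1, hS2, hT2⟩
  -- Gᶜ covered by bad sets
  have hcover : Gᶜ ⊆ ⋃ q ∈ Q, badSet N q.1 q.2 := by
    intro f hf
    simp only [hG, Set.mem_compl_iff, Set.mem_setOf_eq] at hf
    push_neg at hf
    obtain ⟨S, T, hdisj, hS, hT, hedge⟩ := hf
    simp only [Set.mem_iUnion, exists_prop]
    refine ⟨(S, T), ?_, ?_⟩
    · rw [hQ, Finset.mem_biUnion]
      refine ⟨S, Finset.mem_powersetCard.mpr ⟨Finset.subset_univ _, hS⟩, ?_⟩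
      refine Finset.mem_image.mpr ⟨T, Finset.mem_powersetCard.mpr ⟨?_, hT⟩, rfl⟩
      exact le_compl_iff_disjoint_left.mpr hdisj
    · intro i _
      dsimp only
      by_cases hi : i ∈ (S ×ˢ T).image (fun pr => s(pr.1, pr.2))
      · rw [if_pos hi]
        obtain ⟨⟨s, t⟩, hst, rfl⟩ := Finset.mem_image.mp hi
        obtain ⟨hs, ht⟩ := Finset.mem_product.mp hst
        have : f s(s, t) ≠ true := by
          intro h
          exact hedge ⟨s, hs, t, ht, h⟩
        simpa using this
      · rw [if_neg hi]; trivial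
  have hQcard : Q.card ≤ N.choose k * (N - k).choose k := by
    refine (Finset.card_biUnion_le).trans ?_
    calc ∑ S ∈ Finset.univ.powersetCard k, ((Sᶜ.powersetCard k).image (fun T => (S, T))).card
        ≤ ∑ S ∈ Finset.univ.powersetCard k, (N - k).choose k := by
          refine Finset.sum_le_sum fun S hS => ?_
          refine (Finset.card_image_le).trans ?_
          rw [Finset.card_powersetCard, Finset.card_compl,
            (Finset.mem_powersetCard.mp hS).2, Fintype.card_fin]
      _ = N.choose k * (N - k).choose k := by
          rw [Finset.sum_const, Finset.card_powersetCard, Finset.card_univ, Fintype.card_fin,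
            smul_eq_mul]
  have hbound : μ Gᶜ ≤ (N.choose k * (N - k).choose k : ENNReal)
      * (1 - min (ENNReal.ofReal p) 1) ^ (k * k) := by
    calc μ Gᶜ ≤ ∑ q ∈ Q, μ (badSet N q.1 q.2) :=
          (measure_mono hcover).trans (measure_biUnion_finset_le Q _)
      _ = ∑ _q ∈ Q, (1 - min (ENNReal.ofReal p) 1) ^ (k * k) := by
          refine Finset.sum_congr rfl fun q hq => ?_
          obtain ⟨h1, h2, h3⟩ := hQmem q hq
          rw [measure_bad N p q.1 q.2 h1, h2, h3]
      _ = (Q.card : ENNReal) * (1 - min (ENNReal.ofReal p) 1) ^ (k * k) := by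
          rw [Finset.sum_const, nsmul_eq_mul]
      _ ≤ _ := by
          gcongr
          exact_mod_cast hQcard
  rw [tsub_le_iff_right]
  calc (1 : ENNReal) = μ Set.univ := (measure_univ).symm
    _ ≤ μ G + μ Gᶜ := by
        rw [← Set.union_compl_self G]; exact measure_union_le G Gᶜ
    _ ≤ μ G + _ := by gcongr

lemma key_bound (c d : ℝ) (hc : 0 < c) (hc2 : 2 * c < 1)
    (hd : (1 - 2 * c) * Real.log (1 - 2 * c) + 2 * c * Real.log c + c ^ 2 * d ≥ 0)
    (K : ℝ)
    (hK : K = Real.exp (1 + (2 - 2 * Real.log (1 - 2 * c) + 2 * c * d)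
      - Real.log (c / 2) - Real.log (1 - 2 * c) / 2))
    (N : ℕ) (h2d : 2 * d ≤ (N:ℝ)) (hcn : 2 ≤ c * (N:ℝ)) (hmn : 1 ≤ (1 - 2*c) * (N:ℝ)) :
    ((N.choose ⌊c * N⌋₊ * (N - ⌊c * N⌋₊).choose ⌊c * N⌋₊ : ℕ) : ℝ)
      * (1 - d / N) ^ (⌊c * N⌋₊ * ⌊c * N⌋₊) ≤ K / N := by
  have h2c : 0 < 1 - 2 * c := by linarith
  have ha0 : Real.log c < 0 := Real.log_neg hc (by linarith)
  have hb0 : Real.log (1 - 2*c) < 0 := Real.log_neg h2c (by linarith)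
  have hdpos : 0 < d := by nlinarith [sq_nonneg c]
  have hn0 : (0:ℝ) < (N:ℝ) := by nlinarith
  have hN1 : 1 ≤ N := Nat.cast_pos.mp hn0
  set k : ℕ := ⌊c * N⌋₊ with hkdef
  have hkle : (k : ℝ) ≤ c * N := Nat.floor_le (by positivity)
  have hkgt : c * (N:ℝ) - 1 ≤ (k : ℝ) := by
    have := Nat.lt_floor_add_one (c * (N:ℝ))
    rw [← hkdef] at this
    linarith
  have hk1R : (1:ℝ) ≤ (k:ℝ) := by linarith
  have hkpos : (0:ℝ) < (k:ℝ) := by linarith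
  have hk1 : 1 ≤ k := by exact_mod_cast hk1R
  have h2kN : 2 * k ≤ N := by
    have hlt : ((2 * k : ℕ) : ℝ) < (N:ℝ) := by push_cast; nlinarith
    exact (Nat.cast_lt.mp hlt).le
  set m : ℕ := N - 2 * k with hmdef
  have hmcast : (m : ℝ) = (N:ℝ) - 2 * k := by
    rw [hmdef]; push_cast [h2kN]; ring
  have hmlb : (1 - 2*c) * (N:ℝ) ≤ (m:ℝ) := by rw [hmcast]; nlinarith
  have hmub : (m:ℝ) ≤ (1 - 2*c) * (N:ℝ) + 2 := by rw [hmcast]; nlinarith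
  have hm1 : 1 ≤ m := by
    have : (1:ℝ) ≤ (m:ℝ) := by linarith
    exact_mod_cast this
  have hmpos : (0:ℝ) < (m:ℝ) := by linarith
  have hkN : k ≤ N := le_trans (Nat.le_mul_of_pos_left k (by norm_num)) h2kN
  have hkNk : k ≤ N - k := by omega
  have hNkk : (N - k) - k = m := by omega
  have hNkN : N - k ≤ N := Nat.sub_le _ _
  -- positivity of factorials
  have hfNpos : (0:ℝ) < N.factorial := by exact_mod_cast N.factorial_pos
  have hfkpos : (0:ℝ) < k.factorial := by exact_mod_cast k.factorial_pos
  have hfmpos : (0:ℝ) < m.factorial := by exact_mod_cast m.factorial_pos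
  -- p := 1 - d/N ∈ (0,1)
  have hp0 : (0:ℝ) < 1 - d / N := by
    rw [sub_pos, div_lt_one hn0]; linarith
  -- the quantity is positive
  have hApos : (0:ℝ) < ((N.choose k * (N - k).choose k : ℕ) : ℝ) := by
    have h1 := Nat.choose_pos hkN
    have h2 := Nat.choose_pos hkNk
    positivity
  have hrpos : (0:ℝ) < ((N.choose k * (N - k).choose k : ℕ) : ℝ) * (1 - d / N) ^ (k * k) := by
    positivity
  -- write the combinatorial factor with factorials
  have hA : ((N.choose k * (N - k).choose k : ℕ) : ℝ)
      = (N.factorial : ℝ) / ((k.factorial : ℝ)^2 * (m.factorial : ℝ)) := by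
    push_cast
    rw [Nat.cast_choose ℝ hkN, Nat.cast_choose ℝ hkNk, hNkk]
    have hfNkpos : (0:ℝ) < (N - k).factorial := by exact_mod_cast (N-k).factorial_pos
    field_simp
  -- log bounds
  have hlogN : Real.log (N.factorial)
      ≤ 1 + Real.log N / 2 + (N:ℝ) * Real.log N - N := by
    have h := factorial_upper N hN1
    have h2 := Real.log_le_log hfNpos h
    calc Real.log (N.factorial) ≤ _ := h2
      _ = 1 + Real.log N / 2 + (N:ℝ) * Real.log N - N := by
          rw [Real.log_mul (by positivity) (by positivity),
            Real.log_mul (by positivity) (by positivity),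
            Real.log_pow, Real.log_div (by positivity) (by positivity),
            Real.log_sqrt hn0.le, Real.log_exp]
          ring
  have hlogfac_lb : ∀ j : ℕ, 1 ≤ j →
      Real.log j / 2 + (j:ℝ) * Real.log j - j ≤ Real.log (j.factorial) := by
    intro j hj
    have hjpos : (0:ℝ) < (j:ℝ) := by exact_mod_cast hj
    have hfjpos : (0:ℝ) < (j.factorial:ℝ) := by exact_mod_cast j.factorial_pos
    have h := factorial_lower j hj
    have hstep : Real.sqrt ((j:ℝ)) * ((j:ℝ) / Real.exp 1) ^ j ≤ (j.factorial : ℝ) := by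
      refine le_trans ?_ h
      have h1 : (1:ℝ) ≤ Real.sqrt π := by
        rw [show (1:ℝ) = Real.sqrt 1 by simp]
        exact Real.sqrt_le_sqrt (by linarith [Real.pi_gt_three])
      have h2 : Real.sqrt ((j:ℝ)) ≤ Real.sqrt (2 * (j:ℝ)) :=
        Real.sqrt_le_sqrt (by linarith)
      calc Real.sqrt ((j:ℝ)) * ((j:ℝ) / Real.exp 1) ^ j
          ≤ Real.sqrt (2 * (j:ℝ)) * ((j:ℝ) / Real.exp 1) ^ j := by gcongr
        _ ≤ Real.sqrt π * (Real.sqrt (2 * (j:ℝ)) * ((j:ℝ) / Real.exp 1) ^ j) :=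
            le_mul_of_one_le_left (by positivity) h1
    have h2 := Real.log_le_log (by positivity) hstep
    calc Real.log j / 2 + (j:ℝ) * Real.log j - j
        = Real.log (Real.sqrt ((j:ℝ)) * ((j:ℝ) / Real.exp 1) ^ j) := by
          rw [Real.log_mul (by positivity) (by positivity), Real.log_pow,
            Real.log_div (by positivity) (by positivity),
            Real.log_sqrt hjpos.le, Real.log_exp]
          ring
      _ ≤ _ := h2
  have hlogk := hlogfac_lb k hk1
  have hlogm := hlogfac_lb m hm1
  -- log (1 - d/N) ≤ -d/N
  have hlogp : Real.log (1 - d / N) ≤ - (d / N) := by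
    have := Real.log_le_sub_one_of_pos hp0
    linarith
  -- entropy-type estimates
  have hlogk_lb : Real.log c + Real.log N - 1 / k ≤ Real.log k := by
    have h1 : Real.log ((c * N) / k) ≤ (c * N) / k - 1 := Real.log_le_sub_one_of_pos (by positivity)
    have h2 : Real.log ((c * N) / k) = Real.log c + Real.log N - Real.log k := by
      rw [Real.log_div (by positivity) (by positivity), Real.log_mul (by positivity) (by positivity)]
    have h3 : (c * N) / k - 1 ≤ 1 / k := by
      rw [div_sub_one (by positivity), div_le_div_iff₀ hkpos hkpos]
      nlinarith
    linarith
  have hlogm_lb : Real.log (1 - 2*c) + Real.log N ≤ Real.log m := by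
    have : Real.log ((1 - 2*c) * N) ≤ Real.log m := Real.log_le_log (by positivity) hmlb
    rwa [Real.log_mul (by positivity) (by positivity)] at this
  have hlogk_lb2 : Real.log (c / 2) + Real.log N ≤ Real.log k := by
    have hk2 : c / 2 * N ≤ (k:ℝ) := by nlinarith
    have : Real.log (c / 2 * N) ≤ Real.log k := Real.log_le_log (by positivity) hk2
    rwa [Real.log_mul (by positivity) (by positivity)] at this
  -- the k² term
  have hksq : - (d * ((k*k : ℕ):ℝ) / N) ≤ - d * c^2 * N + 2 * c * d := by
    have h1 : (c*(N:ℝ)-1)^2 ≤ ((k*k:ℕ):ℝ) := by push_cast; nlinarith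
    have h2 : d * (c*(N:ℝ)-1)^2 / N ≤ d * ((k*k:ℕ):ℝ) / N := by gcongr
    have h3 : d * (c*(N:ℝ)-1)^2 / N = d*c^2*(N:ℝ) - 2*c*d + d/N := by field_simp; ring
    have h4 : (0:ℝ) ≤ d / (N:ℝ) := by positivity
    linarith
  have hpk : ((k*k:ℕ):ℝ) * Real.log (1 - d/N) ≤ - (d * ((k*k:ℕ):ℝ) / N) := by
    have h0 : (0:ℝ) ≤ ((k*k:ℕ):ℝ) := by positivity
    have := mul_le_mul_of_nonneg_left hlogp h0
    calc ((k*k:ℕ):ℝ) * Real.log (1 - d/N) ≤ ((k*k:ℕ):ℝ) * (-(d/N)) := this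
      _ = - (d * ((k*k:ℕ):ℝ) / N) := by ring
  have hT1 : -(2 * (k:ℝ) * Real.log k)
      ≤ -(2 * (k:ℝ) * (Real.log c + Real.log N)) + 2 := by
    have h0 : (0:ℝ) ≤ 2 * (k:ℝ) := by positivity
    have h := mul_le_mul_of_nonneg_left hlogk_lb h0
    have hkk : 2 * (k:ℝ) * (1/(k:ℝ)) = 2 := by field_simp
    linarith [h, hkk]
  have hT2 : -(2 * (k:ℝ) * Real.log c) ≤ -(2 * (c * (N:ℝ)) * Real.log c) := by
    have h := mul_le_mul_of_nonneg_left hkle (neg_nonneg.mpr ha0.le)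
    linarith
  have hT3 : -((m:ℝ) * Real.log m)
      ≤ -((m:ℝ) * (Real.log (1-2*c) + Real.log N)) := by
    have h := mul_le_mul_of_nonneg_left hlogm_lb (le_of_lt hmpos)
    linarith
  have hT4 : -((m:ℝ) * Real.log (1-2*c))
      ≤ -(((1-2*c) * (N:ℝ)) * Real.log (1-2*c)) + 2 * (-(Real.log (1-2*c))) := by
    have h5 : (m:ℝ) - (1-2*c)*(N:ℝ) ≤ 2 := by linarith
    have h := mul_le_mul_of_nonneg_left h5 (neg_nonneg.mpr hb0.le)
    linarith
  have hentropy : ((1-2*c) * Real.log (1-2*c) + 2*c*Real.log c + c^2*d) * (N:ℝ) ≥ 0 :=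
    mul_nonneg hd hn0.le
  have hNlog : (N:ℝ) * Real.log N - 2*(k:ℝ)*Real.log N - (m:ℝ)*Real.log N = 0 := by
    rw [hmcast]; ring
  have hNlin : -(N:ℝ) + 2*(k:ℝ) + (m:ℝ) = 0 := by rw [hmcast]; ring
  -- log of the whole quantity
  set r : ℝ := ((N.choose k * (N - k).choose k : ℕ) : ℝ) * (1 - d / N) ^ (k * k) with hrdef
  have hlogr : Real.log r
      = Real.log (N.factorial) - (2 * Real.log (k.factorial) + Real.log (m.factorial))
        + ((k*k:ℕ):ℝ) * Real.log (1 - d/N) := by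
    rw [hrdef, Real.log_mul hApos.ne' (by positivity), hA,
      Real.log_div (by positivity) (by positivity),
      Real.log_mul (by positivity) (by positivity),
      Real.log_pow, Real.log_pow]
    push_cast
    ring
  have hfinal : Real.log r
      ≤ (1 + (2 - 2 * Real.log (1 - 2 * c) + 2 * c * d)
          - Real.log (c / 2) - Real.log (1 - 2 * c) / 2) - Real.log N := by
    rw [hlogr]
    linarith [hlogN, hlogk, hlogm, hpk, hksq, hT1, hT2, hT3, hT4, hentropy,
      hNlog, hNlin, hlogk_lb2, hlogm_lb]
  calc r = Real.exp (Real.log r) := (Real.exp_log hrpos).symm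
    _ ≤ Real.exp ((1 + (2 - 2 * Real.log (1 - 2 * c) + 2 * c * d)
          - Real.log (c / 2) - Real.log (1 - 2 * c) / 2) - Real.log N) :=
        Real.exp_le_exp.mpr hfinal
    _ = K / N := by rw [Real.exp_sub, Real.exp_log hn0, hK]

theorem stmt_11 (c d : ℝ) (hc : 0 < c) (hc2 : 2 * c < 1)
    (hd : (1 - 2 * c) * Real.log (1 - 2 * c) + 2 * c * Real.log c + c ^ 2 * d ≥ 0) :
    Filter.Tendsto
      (fun N : ℕ => erdosRenyi N (d / N)
        {f | ∀ S T : Finset (Fin N), Disjoint S T →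
          S.card = ⌊c * N⌋₊ → T.card = ⌊c * N⌋₊ → hasEdgeBetween f S T})
      Filter.atTop (nhds 1) := by
  have h2c : 0 < 1 - 2 * c := by linarith
  have hdpos : 0 < d := by
    nlinarith [Real.log_neg hc (by linarith : c < 1),
      Real.log_neg h2c (by linarith : 1 - 2*c < 1), sq_nonneg c]
  set K : ℝ := Real.exp (1 + (2 - 2 * Real.log (1 - 2 * c) + 2 * c * d)
      - Real.log (c / 2) - Real.log (1 - 2 * c) / 2) with hK
  -- the real sequence tends to zero
  have hr0 : Filter.Tendsto (fun N : ℕ =>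
      ((N.choose ⌊c * N⌋₊ * (N - ⌊c * N⌋₊).choose ⌊c * N⌋₊ : ℕ) : ℝ)
        * (1 - d / N) ^ (⌊c * N⌋₊ * ⌊c * N⌋₊)) atTop (nhds 0) := by
    have e1 : ∀ᶠ N : ℕ in atTop, 2 * d ≤ (N : ℝ) :=
      (tendsto_natCast_atTop_atTop (R := ℝ)).eventually_ge_atTop (2 * d)
    have e2 : ∀ᶠ N : ℕ in atTop, 2 ≤ c * (N : ℝ) :=
      (((tendsto_natCast_atTop_atTop (R := ℝ)).const_mul_atTop hc)).eventually_ge_atTop 2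
    have e3 : ∀ᶠ N : ℕ in atTop, 1 ≤ (1 - 2 * c) * (N : ℝ) :=
      (((tendsto_natCast_atTop_atTop (R := ℝ)).const_mul_atTop h2c)).eventually_ge_atTop 1
    refine tendsto_of_tendsto_of_tendsto_of_le_of_le' tendsto_const_nhds
      (tendsto_const_div_atTop_nhds_zero_nat K) ?_ ?_
    · filter_upwards [e1] with N h2d
      have hn0 : (0:ℝ) < (N:ℝ) := by nlinarith
      have hp0 : (0:ℝ) ≤ 1 - d / N := by
        rw [sub_nonneg, div_le_one hn0]; linarith
      positivity
    · filter_upwards [e1, e2, e3] with N h2d hcn hmn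
      exact key_bound c d hc hc2 hd K hK N h2d hcn hmn
  -- ENNReal lower bound sequence
  have hlow : Filter.Tendsto (fun N : ℕ =>
      1 - ENNReal.ofReal (((N.choose ⌊c * N⌋₊ * (N - ⌊c * N⌋₊).choose ⌊c * N⌋₊ : ℕ) : ℝ)
        * (1 - d / N) ^ (⌊c * N⌋₊ * ⌊c * N⌋₊))) atTop (nhds 1) := by
    have := ENNReal.Tendsto.sub (tendsto_const_nhds (x := (1 : ENNReal)))
      (ENNReal.tendsto_ofReal hr0) (Or.inl ENNReal.one_ne_top)
    simpa using this
  refine tendsto_of_tendsto_of_tendsto_of_le_of_le' hlow tendsto_const_nhds ?_ ?_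
  · -- eventually 1 - ofReal r_N ≤ μ G
    have e1 : ∀ᶠ N : ℕ in atTop, d ≤ (N : ℝ) :=
      (tendsto_natCast_atTop_atTop (R := ℝ)).eventually_ge_atTop d
    filter_upwards [e1, eventually_ge_atTop 1] with N hdN hN1
    set k : ℕ := ⌊c * N⌋₊
    have hn0 : (0:ℝ) < (N:ℝ) := by exact_mod_cast hN1
    have hd01 : 0 ≤ d / (N:ℝ) := by positivity
    have hd1 : d / (N:ℝ) ≤ 1 := by rw [div_le_one hn0]; linarith
    have hmin : min (ENNReal.ofReal (d / N)) 1 = ENNReal.ofReal (d / N) :=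
      min_eq_left (ENNReal.ofReal_le_one.mpr hd1)
    have hofr : ENNReal.ofReal (((N.choose k * (N - k).choose k : ℕ) : ℝ)
          * (1 - d / N) ^ (k * k))
        = (N.choose k * (N - k).choose k : ENNReal)
          * (1 - min (ENNReal.ofReal (d / N)) 1) ^ (k * k) := by
      rw [hmin, ENNReal.ofReal_mul (by positivity),
        ENNReal.ofReal_pow (by rw [sub_nonneg, div_le_one hn0]; linarith),
        ENNReal.ofReal_sub 1 hd01, ENNReal.ofReal_one, ENNReal.ofReal_natCast]
      push_cast
      ring
    rw [hofr]
    exact union_bound N (d / N) k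
  · exact Filter.Eventually.of_forall fun N => prob_le_one
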